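/- Under the gap assumption, for any operator L on the finite-dimensional Hilbert space, [L, P] - i [[I(L), H], P] = 0, where P is the spectral projection onto the gapped patch and I is the weighted time-average map I(A) = ∫ W(t) e^{itH} A e^{-itH} dt. -/

import Mathlib

open MeasureTheory Complex

lemma pow_sum_proj {𝔸 : Type*} [Ring 𝔸] {k : ℕ}
    (E : Fin k → 𝔸) (c : Fin k → ℂ) [Algebra ℂ 𝔸]
    (hEproj : ∀ i, E i * E i = E i)
    (hEorth : ∀ i j, i ≠ j → E i * E j = 0)
    (hEsum : ∑ i, E i = 1) :
    ∀ m : ℕ, (∑ i, c i • E i) ^ m = ∑ i, (c i ^ m) • E i := by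
  intro m
  induction m with
  | zero => simp [hEsum]
  | succ m ih =>
    rw [pow_succ, ih, Finset.sum_mul]
    refine Finset.sum_congr rfl fun i _ => ?_
    rw [Finset.mul_sum]
    rw [Finset.sum_eq_single i]
    · rw [smul_mul_assoc, mul_smul_comm, hEproj, smul_smul, ← pow_succ]
    · intro j _ hj
      rw [smul_mul_assoc, mul_smul_comm, hEorth i j (Ne.symm hj), smul_zero, smul_zero]
    · simp

lemma exp_sum_proj {𝔸 : Type*} [NormedRing 𝔸] [NormedAlgebra ℂ 𝔸] [CompleteSpace 𝔸] {k : ℕ}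
    (E : Fin k → 𝔸) (c : Fin k → ℂ)
    (hEproj : ∀ i, E i * E i = E i)
    (hEorth : ∀ i j, i ≠ j → E i * E j = 0)
    (hEsum : ∑ i, E i = 1) :
    NormedSpace.exp (∑ i, c i • E i) = ∑ i, Complex.exp (c i) • E i := by
  rw [NormedSpace.exp_eq_tsum ℂ]
  have h1 : ∀ m : ℕ, ((m.factorial : ℂ))⁻¹ • (∑ i, c i • E i) ^ m
      = ∑ i, (((m.factorial : ℂ))⁻¹ * c i ^ m) • E i := by
    intro m
    rw [pow_sum_proj E c hEproj hEorth hEsum, Finset.smul_sum]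
    simp [smul_smul]
  simp only [h1]
  rw [Summable.tsum_finsetSum]
  · refine Finset.sum_congr rfl fun i _ => ?_
    rw [Summable.tsum_smul_const]
    · congr 1
      rw [Complex.exp_eq_exp_ℂ, NormedSpace.exp_eq_tsum ℂ]
      simp [smul_eq_mul]
    · have := NormedSpace.expSeries_summable' (𝕂 := ℂ) (c i)
      simpa [smul_eq_mul] using this
  · intro i _
    exact ((NormedSpace.expSeries_summable' (𝕂 := ℂ) (c i)).congr
      (by simp [smul_eq_mul])).smul_const _

set_option maxHeartbeats 1000000 in
set_option synthInstance.maxHeartbeats 400000 in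
/-- `[L,P] - i [[I(L),H],P] = 0` under the gap assumption. -/
theorem commutator_inversion_identity (n k : ℕ)
    (H P L : EuclideanSpace ℂ (Fin n) →L[ℂ] EuclideanSpace ℂ (Fin n))
    (γ : ℝ) (hγ : 0 < γ)
    (lam : Fin k → ℝ)
    (E : Fin k → (EuclideanSpace ℂ (Fin n) →L[ℂ] EuclideanSpace ℂ (Fin n)))
    (hEproj : ∀ i, E i * E i = E i) (hEsa : ∀ i, star (E i) = E i)
    (hEorth : ∀ i j, i ≠ j → E i * E j = 0)
    (hEsum : ∑ i, E i = 1)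
    (hH : H = ∑ i, (lam i : ℂ) • E i)
    (S : Finset (Fin k)) (hP : P = ∑ i ∈ S, E i)
    (hgap : ∀ i ∈ S, ∀ j ∉ S, γ ≤ |lam i - lam j|)
    (W : ℝ → ℂ) (hWint : Integrable W)
    (hW : ∀ ξ : ℝ, γ ≤ |ξ| →
      (1 / (Real.sqrt (2 * Real.pi) : ℂ)) *
          (∫ t : ℝ, Complex.exp (-(Complex.I * ξ * t)) * W t)
        = -Complex.I / ((Real.sqrt (2 * Real.pi) : ℂ) * ξ)) :
    let IL := ∫ t : ℝ, W t • (NormedSpace.exp ((Complex.I * t) • H) * L *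
                NormedSpace.exp (-(Complex.I * t) • H))
    (L * P - P * L) - Complex.I •
        ((IL * H - H * IL) * P - P * (IL * H - H * IL)) = 0 := by
  intro IL
  have hILdef : IL = ∫ t : ℝ, W t • (NormedSpace.exp ((Complex.I * t) • H) * L *
      NormedSpace.exp (-(Complex.I * t) • H)) := rfl
  set χ : Fin k → ℂ := fun j => if j ∈ S then 1 else 0 with hχdef
  -- collapse lemmas
  have hsumE : ∀ (g : Fin k → ℂ) (a : Fin k), (∑ j, g j • E j) * E a = g a • E a := by
    intro g a
    rw [Finset.sum_mul, Finset.sum_eq_single a]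
    · rw [smul_mul_assoc, hEproj]
    · intro j _ hj
      rw [smul_mul_assoc, hEorth j a hj]
      ext x; simp
    · simp
  have hEsum' : ∀ (g : Fin k → ℂ) (b : Fin k), E b * (∑ j, g j • E j) = g b • E b := by
    intro g b
    rw [Finset.mul_sum, Finset.sum_eq_single b]
    · rw [mul_smul_comm, hEproj]
    · intro j _ hj
      rw [mul_smul_comm, hEorth b j (Ne.symm hj)]
      ext x; simp
    · simp
  have hBmul : ∀ (f : Fin k → Fin k → ℂ) (g : Fin k → ℂ),
      (∑ a, ∑ b, f a b • (E a * L * E b)) * (∑ j, g j • E j)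
        = ∑ a, ∑ b, (f a b * g b) • (E a * L * E b) := by
    intro f g
    rw [Finset.sum_mul]
    refine Finset.sum_congr rfl fun a _ => ?_
    rw [Finset.sum_mul]
    refine Finset.sum_congr rfl fun b _ => ?_
    rw [smul_mul_assoc, mul_assoc, hEsum' g b, mul_smul_comm, smul_smul]
  have hmulB : ∀ (g : Fin k → ℂ) (f : Fin k → Fin k → ℂ),
      (∑ j, g j • E j) * (∑ a, ∑ b, f a b • (E a * L * E b))
        = ∑ a, ∑ b, (f a b * g a) • (E a * L * E b) := by
    intro g f
    rw [Finset.mul_sum]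
    refine Finset.sum_congr rfl fun a _ => ?_
    rw [Finset.mul_sum]
    refine Finset.sum_congr rfl fun b _ => ?_
    rw [mul_smul_comm, ← mul_assoc, ← mul_assoc, hsumE g a,
      smul_mul_assoc, smul_mul_assoc, smul_smul]
  have hsub : ∀ (f g : Fin k → Fin k → ℂ),
      (∑ a, ∑ b, f a b • (E a * L * E b)) - (∑ a, ∑ b, g a b • (E a * L * E b))
        = ∑ a, ∑ b, (f a b - g a b) • (E a * L * E b) := by
    intro f g
    rw [← Finset.sum_sub_distrib]
    refine Finset.sum_congr rfl fun a _ => ?_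
    rw [← Finset.sum_sub_distrib]
    exact Finset.sum_congr rfl fun b _ => (sub_smul _ _ _).symm
  have hIsmul : ∀ (f : Fin k → Fin k → ℂ),
      Complex.I • (∑ a, ∑ b, f a b • (E a * L * E b)) = ∑ a, ∑ b, (Complex.I * f a b) • (E a * L * E b) := by
    intro f
    rw [Finset.smul_sum]
    refine Finset.sum_congr rfl fun a _ => ?_
    rw [Finset.smul_sum]
    exact Finset.sum_congr rfl fun b _ => (smul_smul _ _ _)
  -- P as a weighted sum
  have hPsum : P = ∑ j, χ j • E j := by
    rw [hP]
    rw [show (∑ j, χ j • E j) = ∑ j, (if j ∈ S then E j else 0) from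
      Finset.sum_congr rfl fun j _ => by
        by_cases h : j ∈ S
        · simp [hχdef, h]
        · simp only [hχdef, h, if_neg, ite_false]
          exact zero_smul ℂ (E j)]
    rw [Finset.sum_ite_mem, Finset.univ_inter]
  -- L as a double sum
  have hL : L = ∑ a, ∑ b, (1 : ℂ) • (E a * L * E b) := by
    have h1 : L = (∑ a, E a) * L * (∑ b, E b) := by rw [hEsum, one_mul, mul_one]
    conv_lhs => rw [h1]
    rw [Finset.sum_mul, Finset.sum_mul]
    refine Finset.sum_congr rfl fun a _ => ?_
    rw [Finset.mul_sum]
    exact Finset.sum_congr rfl fun b _ => by rw [one_smul]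
  -- exponentials
  have hexp1 : ∀ t : ℝ, NormedSpace.exp ((Complex.I * t) • H)
      = ∑ a, Complex.exp (Complex.I * t * lam a) • E a := by
    intro t
    have h1 : (Complex.I * (t : ℂ)) • H = ∑ a, (Complex.I * t * lam a) • E a := by
      rw [hH, Finset.smul_sum]
      exact Finset.sum_congr rfl fun a _ => by rw [smul_smul]
    rw [h1, exp_sum_proj E _ hEproj hEorth hEsum]
  have hexp2 : ∀ t : ℝ, NormedSpace.exp (-(Complex.I * t) • H)
      = ∑ b, Complex.exp (-(Complex.I * t) * lam b) • E b := by
    intro t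
    have h1 : (-(Complex.I * (t : ℂ))) • H = ∑ b, (-(Complex.I * t) * lam b) • E b := by
      rw [hH, Finset.smul_sum]
      exact Finset.sum_congr rfl fun b _ => by rw [smul_smul]
    rw [h1, exp_sum_proj E _ hEproj hEorth hEsum]
  have hconj : ∀ t : ℝ, NormedSpace.exp ((Complex.I * t) • H) * L *
      NormedSpace.exp (-(Complex.I * t) • H)
      = ∑ a, ∑ b, Complex.exp (Complex.I * t * ((lam a - lam b : ℝ) : ℂ)) • (E a * L * E b) := by
    intro t
    rw [hexp1 t, hexp2 t, Finset.sum_mul, Finset.sum_mul]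
    refine Finset.sum_congr rfl fun a _ => ?_
    rw [Finset.mul_sum]
    refine Finset.sum_congr rfl fun b _ => ?_
    rw [smul_mul_assoc, smul_mul_assoc, mul_smul_comm, smul_smul, ← Complex.exp_add]
    congr 1
    push_cast
    ring
  -- integrability
  have hInt : ∀ r : ℝ, Integrable (fun t : ℝ => W t * Complex.exp (Complex.I * t * (r : ℂ))) := by
    intro r
    have h1 : Integrable (fun t : ℝ => Complex.exp (Complex.I * t * (r : ℂ)) * W t) := by
      refine hWint.bdd_mul (c := 1) ?_ (Filter.Eventually.of_forall fun t => ?_)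
      · exact (Complex.continuous_exp.comp
          ((continuous_const.mul Complex.continuous_ofReal).mul continuous_const)).aestronglyMeasurable
      · rw [Complex.norm_exp]
        simp
    simpa [mul_comm] using h1
  set c : Fin k → Fin k → ℂ := fun a b =>
    ∫ t : ℝ, W t * Complex.exp (Complex.I * t * ((lam a - lam b : ℝ) : ℂ)) with hcdef
  have hIL : IL = ∑ a, ∑ b, c a b • (E a * L * E b) := by
    rw [hILdef]
    rw [show (fun t : ℝ => W t • (NormedSpace.exp ((Complex.I * t) • H) * L *
        NormedSpace.exp (-(Complex.I * t) • H)))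
        = fun t : ℝ => ∑ a, ∑ b, (W t * Complex.exp (Complex.I * t * ((lam a - lam b : ℝ) : ℂ))) • (E a * L * E b) from
      funext fun t => by
        rw [hconj t, Finset.smul_sum]
        refine Finset.sum_congr rfl fun a _ => ?_
        rw [Finset.smul_sum]
        exact Finset.sum_congr rfl fun b _ => smul_smul _ _ _]
    rw [integral_finset_sum _ (fun a _ => integrable_finset_sum _
      (fun b _ => (hInt _).smul_const _))]
    refine Finset.sum_congr rfl fun a _ => ?_
    rw [integral_finset_sum _ (fun b _ => (hInt _).smul_const _)]
    exact Finset.sum_congr rfl fun b _ => integral_smul_const _ _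
  -- the commutator with H
  have hX : IL * H - H * IL
      = ∑ a, ∑ b, (c a b * (lam b : ℂ) - c a b * (lam a : ℂ)) • (E a * L * E b) := by
    rw [hIL, hH, hBmul, hmulB, hsub]
  -- the commutator with P
  have hXP : (IL * H - H * IL) * P - P * (IL * H - H * IL)
      = ∑ a, ∑ b, ((c a b * (lam b : ℂ) - c a b * (lam a : ℂ)) * χ b
          - (c a b * (lam b : ℂ) - c a b * (lam a : ℂ)) * χ a) • (E a * L * E b) := by
    rw [hX, hPsum, hBmul, hmulB, hsub]
  have hLP : L * P - P * L = ∑ a, ∑ b, ((1 : ℂ) * χ b - (1 : ℂ) * χ a) • (E a * L * E b) := by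
    conv_lhs => rw [hL, hPsum]
    rw [hBmul, hmulB, hsub]
  have hdgen : ∀ a b : Fin k, γ ≤ |lam b - lam a| →
      c a b * (lam b : ℂ) - c a b * (lam a : ℂ) = -Complex.I := by
    intro a b hgab
    have hne : (lam b - lam a : ℝ) ≠ 0 := by
      intro h
      rw [h, abs_zero] at hgab
      linarith
    have hξc0 : ((lam b - lam a : ℝ) : ℂ) ≠ 0 := Complex.ofReal_ne_zero.mpr hne
    have hq : ((Real.sqrt (2 * Real.pi) : ℝ) : ℂ) ≠ 0 :=
      Complex.ofReal_ne_zero.mpr (ne_of_gt (Real.sqrt_pos.mpr (by positivity)))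
    have hWc := hW (lam b - lam a) hgab
    have hcc : c a b
        = ∫ t : ℝ, Complex.exp (-(Complex.I * ((lam b - lam a : ℝ) : ℂ) * t)) * W t := by
      simp only [hcdef]
      congr 1
      funext t
      rw [mul_comm]
      congr 2
      push_cast
      ring
    have h3 : c a b = ((Real.sqrt (2 * Real.pi) : ℝ) : ℂ) *
        (-Complex.I / (((Real.sqrt (2 * Real.pi) : ℝ) : ℂ) * ((lam b - lam a : ℝ) : ℂ))) := by
      rw [hcc, ← hWc, ← mul_assoc, mul_one_div, div_self hq, one_mul]
    obtain ⟨q, hqdef⟩ : ∃ q : ℂ, ((Real.sqrt (2 * Real.pi) : ℝ) : ℂ) = q := ⟨_, rfl⟩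
    rw [hqdef] at h3 hq
    rw [h3]
    have hba : ((lam b : ℂ) - (lam a : ℂ)) ≠ 0 := by
      intro h
      apply hξc0
      push_cast
      rw [sub_eq_zero] at h ⊢
      exact h
    push_cast
    field_simp
    ring
  rw [hLP, hXP, hIsmul, hsub]
  refine Finset.sum_eq_zero fun a _ => Finset.sum_eq_zero fun b _ => ?_
  by_cases haS : a ∈ S <;> by_cases hbS : b ∈ S
  · have hz : ((1:ℂ) * χ b - 1 * χ a - Complex.I *
        ((c a b * (lam b : ℂ) - c a b * (lam a : ℂ)) * χ b
          - (c a b * (lam b : ℂ) - c a b * (lam a : ℂ)) * χ a)) = 0 := by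
      simp only [hχdef, haS, hbS, if_true, ite_true]
      ring
    rw [hz]
    exact zero_smul ℂ (E a * L * E b)
  · have hd := hdgen a b (by rw [abs_sub_comm]; exact hgap a haS b hbS)
    have hz : ((1:ℂ) * χ b - 1 * χ a - Complex.I *
        ((c a b * (lam b : ℂ) - c a b * (lam a : ℂ)) * χ b
          - (c a b * (lam b : ℂ) - c a b * (lam a : ℂ)) * χ a)) = 0 := by
      rw [hd]
      simp only [hχdef, haS, hbS, if_true, if_false, ite_true, ite_false]
      linear_combination -Complex.I_sq
    rw [hz]
    exact zero_smul ℂ (E a * L * E b)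
  · have hd := hdgen a b (hgap b hbS a haS)
    have hz : ((1:ℂ) * χ b - 1 * χ a - Complex.I *
        ((c a b * (lam b : ℂ) - c a b * (lam a : ℂ)) * χ b
          - (c a b * (lam b : ℂ) - c a b * (lam a : ℂ)) * χ a)) = 0 := by
      rw [hd]
      simp only [hχdef, haS, hbS, if_true, if_false, ite_true, ite_false]
      linear_combination Complex.I_sq
    rw [hz]
    exact zero_smul ℂ (E a * L * E b)
  · have hz : ((1:ℂ) * χ b - 1 * χ a - Complex.I *
        ((c a b * (lam b : ℂ) - c a b * (lam a : ℂ)) * χ b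
          - (c a b * (lam b : ℂ) - c a b * (lam a : ℂ)) * χ a)) = 0 := by
      simp only [hχdef, haS, hbS, if_false, ite_false]
      ring
    rw [hz]
    exact zero_smul ℂ (E a * L * E b)
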